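/- If S is a real p×p positive semidefinite matrix that is not positive definite (i.e., has a zero eigenvalue), then the Gaussian log-likelihood l(Θ) = log det Θ − tr(SΘ) is unbounded above over positive definite matrices Θ. -/

import Mathlib

open Matrix

theorem loglik_unbounded_of_singular (p : ℕ) (S : Matrix (Fin p) (Fin p) ℝ)
    (hS : S.PosSemidef) (x : Fin p → ℝ) (hx : x ≠ 0) (hker : S *ᵥ x = 0) :
    ∀ M : ℝ, ∃ Θ : Matrix (Fin p) (Fin p) ℝ, Θ.PosDef ∧
      M < Real.log Θ.det - (S * Θ).trace := by
  intro M
  have hxx : 0 < x ⬝ᵥ x := by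
    simpa using dotProduct_star_self_pos_iff.mpr hx
  set t : ℝ := Real.exp (M + S.trace) / (x ⬝ᵥ x) with ht
  have htpos : 0 < t := div_pos (Real.exp_pos _) hxx
  refine ⟨1 + t • vecMulVec x x, ?_, ?_⟩
  · refine Matrix.PosDef.add_posSemidef Matrix.PosDef.one ?_
    refine posSemidef_iff_dotProduct_mulVec.mpr ⟨?_, ?_⟩
    · unfold Matrix.IsHermitian
      ext i j
      simp [vecMulVec, mul_comm]
    · intro y
      have hmv : vecMulVec x x *ᵥ y = (x ⬝ᵥ y) • x := by
        ext i
        simp only [vecMulVec, mulVec, dotProduct, Pi.smul_apply, smul_eq_mul,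
          Finset.sum_mul, of_apply]
        exact Finset.sum_congr rfl (fun j _ => by ring)
      have h5 : (t • vecMulVec x x) *ᵥ y = (t * (x ⬝ᵥ y)) • x := by
        rw [smul_mulVec, hmv, smul_smul]
      rw [h5, star_trivial, dotProduct_smul, smul_eq_mul, dotProduct_comm, mul_assoc]
      exact mul_nonneg htpos.le (mul_self_nonneg _)
  · have hdet : (1 + t • vecMulVec x x).det = 1 + Real.exp (M + S.trace) := by
      have h1 : t • vecMulVec x x = vecMulVec (t • x) x := by
        ext i j; simp [vecMulVec, mul_assoc]
      rw [h1, vecMulVec_eq (Fin 1), det_one_add_replicateCol_mul_replicateRow]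
      congr 1
      rw [dotProduct_smul, smul_eq_mul, ht]
      field_simp
    have htr : (S * (1 + t • vecMulVec x x)).trace = S.trace := by
      have h2 : S * vecMulVec x x = vecMulVec (S *ᵥ x) x := by
        ext i j
        simp [vecMulVec, mul_apply, mulVec, dotProduct, Finset.sum_mul, mul_assoc]
      rw [mul_add, mul_one, Matrix.mul_smul, h2, hker]
      have : vecMulVec (0 : Fin p → ℝ) x = 0 := by ext i j; simp [vecMulVec]
      rw [this, smul_zero, add_zero]
    rw [hdet, htr]
    have h3 : Real.exp (M + S.trace) < 1 + Real.exp (M + S.trace) := by linarith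
    have := Real.log_lt_log (Real.exp_pos _) h3
    rw [Real.log_exp] at this
    linarith
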